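/- Suppose in addition that G = ℤ^d for some d ≥ 1 and that there exists M > 0 such that: (i) for L-almost every x ∈ M and every integer k ≥ 0, card{(s,u) ∈ [0,1)×[k,k+1) : s ≠ u and π_R(φ⁰_s(x,0)) = π_R(φ⁰_u(x,0))} ≤ M·1_{|h_k(x)| ≤ M}, where h_k := h(k,·) and |·| denotes the supremum norm on ℤ^d; and (ii) ∑_{k ≥ 0} L({x ∈ M : |h_k(x)| ≤ M}) < ∞. Then ∫_M I(x) dL(x) < ∞. -/

import Mathlib

open MeasureTheory Filter
open scoped ENNReal

lemma encard_iUnion_le_tsum' {α ι : Type*} [Countable ι] (A : ι → Set α) :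
    ((⋃ i, A i).encard : ℝ≥0∞) ≤ ∑' i, ((A i).encard : ℝ≥0∞) := by
  rw [← ENNReal.tsum_set_one]
  calc ∑' (_ : (⋃ i, A i)), (1 : ℝ≥0∞)
      ≤ ∑' i, ∑' (_ : A i), (1 : ℝ≥0∞) := ENNReal.tsum_iUnion_le_tsum (fun _ => 1) A
    _ = ∑' i, ((A i).encard : ℝ≥0∞) := by simp

/-- For a `ℤ^d`-extension (`d ≥ 1`) of an ergodic probability-preserving flow, if the
number of intersections of the time-`[0,1)` trajectory with the time-`[k,k+1)` trajectory
is bounded by `M·1_{|h_k| ≤ M}` (sup norm on `ℤ^d`) and `∑_k L(|h_k| ≤ M) < ∞`, then the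
mean self-intersection count `∫_M I dL` is finite. -/
theorem stmt7 {M R : Type*} [MeasurableSpace M] (d : ℕ) (hd : 1 ≤ d)
    (L : Measure M) [IsProbabilityMeasure L]
    (φ : ℝ → M → M)
    (hφmeas : Measurable (fun p : ℝ × M => φ p.1 p.2))
    (hφ0 : φ 0 = id)
    (hφflow : ∀ s t : ℝ, φ (t + s) = φ t ∘ φ s)
    (hφpres : ∀ t : ℝ, MeasurePreserving (φ t) L L)
    (hErg : ∀ A : Set M, MeasurableSet A → (∀ t : ℝ, φ t ⁻¹' A = A) → L A = 0 ∨ L A = 1)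
    (h : ℝ → M → (Fin d → ℤ))
    (hhmeas : Measurable (fun p : ℝ × M => h p.1 p.2))
    (hcoc : ∀ s t : ℝ, ∀ x : M, h (t + s) x = h t x + h s (φ t x))
    (π : M × (Fin d → ℤ) → R)
    (hπ : ∀ (x x' : M) (a a' : Fin d → ℤ), π (x, a) = π (x', a') ↔ π (x, 0) = π (x', a' - a))
    (hmeasblock : ∀ k m : ℕ, Measurable (fun x : M =>
      (({p : ℝ × ℝ | p.1 ∈ Set.Ico (m : ℝ) ((m : ℝ) + 1) ∧ p.2 ∈ Set.Ico (k : ℝ) ((k : ℝ) + 1) ∧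
          p.1 ≠ p.2 ∧ π (φ p.1 x, h p.1 x) = π (φ p.2 x, h p.2 x)}.encard : ℝ≥0∞))))
    (Mb : ℝ) (hMb : 0 < Mb)
    (hbound : ∀ᵐ x ∂L, ∀ k : ℕ,
      (({p : ℝ × ℝ | p.1 ∈ Set.Ico (0 : ℝ) 1 ∧ p.2 ∈ Set.Ico (k : ℝ) ((k : ℝ) + 1) ∧
          p.1 ≠ p.2 ∧ π (φ p.1 x, h p.1 x) = π (φ p.2 x, h p.2 x)}.encard : ℝ≥0∞))
        ≤ if ∀ i : Fin d, (|h (k : ℝ) x i| : ℝ) ≤ Mb then ENNReal.ofReal Mb else 0)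
    (hsum : (∑' k : ℕ, L {x : M | ∀ i : Fin d, (|h (k : ℝ) x i| : ℝ) ≤ Mb}) < ⊤) :
    (∫⁻ (x : M),
      (({p : ℝ × ℝ | p.1 ∈ Set.Ico (0 : ℝ) 1 ∧ p.2 ∈ Set.Ico (0 : ℝ) 1 ∧ p.1 ≠ p.2 ∧
          π (φ p.1 x, h p.1 x) = π (φ p.2 x, h p.2 x)}.encard : ℝ≥0∞)
        + 2 * ({p : ℝ × ℝ | p.1 ∈ Set.Ico (0 : ℝ) 1 ∧ p.2 ∈ Set.Ici (1 : ℝ) ∧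
          π (φ p.1 x, h p.1 x) = π (φ p.2 x, h p.2 x)}.encard : ℝ≥0∞)) ∂L) < ⊤ := by
  classical
  -- the block sets
  set B : ℕ → M → Set (ℝ × ℝ) := fun k x =>
    {p : ℝ × ℝ | p.1 ∈ Set.Ico (0 : ℝ) 1 ∧ p.2 ∈ Set.Ico (k : ℝ) ((k : ℝ) + 1) ∧
      p.1 ≠ p.2 ∧ π (φ p.1 x, h p.1 x) = π (φ p.2 x, h p.2 x)} with hB
  -- the good sets
  set A : ℕ → Set M := fun k => {x : M | ∀ i : Fin d, (|h (k : ℝ) x i| : ℝ) ≤ Mb} with hA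
  have hAmeas : ∀ k : ℕ, MeasurableSet (A k) := by
    intro k
    have h1 : Measurable (fun x : M => h (k : ℝ) x) :=
      hhmeas.comp (measurable_const.prodMk measurable_id)
    have : A k = ⋂ i : Fin d, (fun x : M => h (k : ℝ) x i) ⁻¹' {n : ℤ | (|n| : ℝ) ≤ Mb} := by
      ext x; simp [hA, Set.mem_iInter]
    rw [this]
    exact MeasurableSet.iInter fun i =>
      ((measurable_pi_apply i).comp h1) (by trivial)
  have hBmeas : ∀ k : ℕ, Measurable (fun x : M => ((B k x).encard : ℝ≥0∞)) := by
    intro k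
    have := hmeasblock k 0
    simpa [hB] using this
  -- per-block integral bound
  have hint : ∀ k : ℕ,
      ∫⁻ x, ((B k x).encard : ℝ≥0∞) ∂L ≤ ENNReal.ofReal Mb * L (A k) := by
    intro k
    have hmono : ∀ᵐ x ∂L, ((B k x).encard : ℝ≥0∞) ≤
        (A k).indicator (fun _ => ENNReal.ofReal Mb) x := by
      filter_upwards [hbound] with x hx
      have hxk := hx k
      by_cases hm : ∀ i : Fin d, (|h (k : ℝ) x i| : ℝ) ≤ Mb
      · simp only [if_pos hm] at hxk
        simpa [Set.indicator_apply, hA, hB, Set.mem_setOf_eq, hm] using hxk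
      · simp only [if_neg hm] at hxk
        simpa [Set.indicator_apply, hA, hB, Set.mem_setOf_eq, hm] using hxk
    calc ∫⁻ x, ((B k x).encard : ℝ≥0∞) ∂L
        ≤ ∫⁻ x, (A k).indicator (fun _ => ENNReal.ofReal Mb) x ∂L := lintegral_mono_ae hmono
      _ = ENNReal.ofReal Mb * L (A k) := lintegral_indicator_const (hAmeas k) _
  -- the tail set is contained in the union of blocks k ≥ 1
  have htail : ∀ x : M,
      {p : ℝ × ℝ | p.1 ∈ Set.Ico (0 : ℝ) 1 ∧ p.2 ∈ Set.Ici (1 : ℝ) ∧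
        π (φ p.1 x, h p.1 x) = π (φ p.2 x, h p.2 x)} ⊆ ⋃ k : ℕ, B (k + 1) x := by
    intro x p hp
    obtain ⟨hp1, hp2, hpπ⟩ := hp
    have h1le : (1 : ℝ) ≤ p.2 := hp2
    have hne : p.1 ≠ p.2 := ne_of_lt (lt_of_lt_of_le hp1.2 h1le)
    set n : ℕ := ⌊p.2⌋₊ with hn
    have hpos : 1 ≤ n := (Nat.one_le_floor_iff p.2).mpr h1le
    obtain ⟨k, hk⟩ : ∃ k : ℕ, n = k + 1 := ⟨n - 1, (Nat.succ_pred_eq_of_pos hpos).symm⟩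
    refine Set.mem_iUnion.mpr ⟨k, ?_⟩
    have hfloor_le : ((n : ℝ)) ≤ p.2 := Nat.floor_le (le_trans zero_le_one h1le)
    have hlt : p.2 < (n : ℝ) + 1 := Nat.lt_floor_add_one p.2
    refine ⟨hp1, ?_, hne, hpπ⟩
    rw [← hk]
    exact ⟨hfloor_le, hlt⟩
  -- pointwise bound on the tail term
  have hptw : ∀ x : M,
      (({p : ℝ × ℝ | p.1 ∈ Set.Ico (0 : ℝ) 1 ∧ p.2 ∈ Set.Ici (1 : ℝ) ∧
        π (φ p.1 x, h p.1 x) = π (φ p.2 x, h p.2 x)}.encard : ℝ≥0∞))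
        ≤ ∑' k : ℕ, ((B (k + 1) x).encard : ℝ≥0∞) := by
    intro x
    calc (({p : ℝ × ℝ | p.1 ∈ Set.Ico (0 : ℝ) 1 ∧ p.2 ∈ Set.Ici (1 : ℝ) ∧
        π (φ p.1 x, h p.1 x) = π (φ p.2 x, h p.2 x)}.encard : ℝ≥0∞))
        ≤ (((⋃ k : ℕ, B (k + 1) x).encard : ℝ≥0∞)) := by
          exact_mod_cast ENat.toENNReal_le.mpr (Set.encard_le_encard (htail x))
      _ ≤ ∑' k : ℕ, ((B (k + 1) x).encard : ℝ≥0∞) := encard_iUnion_le_tsum' _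
  -- put everything together
  have key : (∫⁻ (x : M),
      (({p : ℝ × ℝ | p.1 ∈ Set.Ico (0 : ℝ) 1 ∧ p.2 ∈ Set.Ico (0 : ℝ) 1 ∧ p.1 ≠ p.2 ∧
          π (φ p.1 x, h p.1 x) = π (φ p.2 x, h p.2 x)}.encard : ℝ≥0∞)
        + 2 * ({p : ℝ × ℝ | p.1 ∈ Set.Ico (0 : ℝ) 1 ∧ p.2 ∈ Set.Ici (1 : ℝ) ∧
          π (φ p.1 x, h p.1 x) = π (φ p.2 x, h p.2 x)}.encard : ℝ≥0∞)) ∂L)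
      ≤ ENNReal.ofReal Mb * L (A 0)
        + 2 * ∑' k : ℕ, (ENNReal.ofReal Mb * L (A (k + 1))) := by
    have step1 : (∫⁻ (x : M),
        (({p : ℝ × ℝ | p.1 ∈ Set.Ico (0 : ℝ) 1 ∧ p.2 ∈ Set.Ico (0 : ℝ) 1 ∧ p.1 ≠ p.2 ∧
            π (φ p.1 x, h p.1 x) = π (φ p.2 x, h p.2 x)}.encard : ℝ≥0∞)
          + 2 * ({p : ℝ × ℝ | p.1 ∈ Set.Ico (0 : ℝ) 1 ∧ p.2 ∈ Set.Ici (1 : ℝ) ∧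
            π (φ p.1 x, h p.1 x) = π (φ p.2 x, h p.2 x)}.encard : ℝ≥0∞)) ∂L)
        ≤ ∫⁻ x, (((B 0 x).encard : ℝ≥0∞)
            + 2 * ∑' k : ℕ, ((B (k + 1) x).encard : ℝ≥0∞)) ∂L := by
      refine lintegral_mono fun x => ?_
      dsimp only
      have hB0 : ({p : ℝ × ℝ | p.1 ∈ Set.Ico (0 : ℝ) 1 ∧ p.2 ∈ Set.Ico (0 : ℝ) 1 ∧ p.1 ≠ p.2 ∧
          π (φ p.1 x, h p.1 x) = π (φ p.2 x, h p.2 x)}.encard : ℝ≥0∞) = ((B 0 x).encard : ℝ≥0∞) := by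
        simp [hB]
      rw [hB0]
      exact add_le_add le_rfl (mul_le_mul_right (hptw x) 2)
    have step2 : ∫⁻ x, (((B 0 x).encard : ℝ≥0∞)
          + 2 * ∑' k : ℕ, ((B (k + 1) x).encard : ℝ≥0∞)) ∂L
        = (∫⁻ x, ((B 0 x).encard : ℝ≥0∞) ∂L)
          + 2 * ∑' k : ℕ, ∫⁻ x, ((B (k + 1) x).encard : ℝ≥0∞) ∂L := by
      rw [lintegral_add_left (hBmeas 0)]
      congr 1
      rw [lintegral_const_mul' 2 _ (by norm_num)]
      congr 1
      exact lintegral_tsum fun k => (hBmeas (k + 1)).aemeasurable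
    calc _ ≤ _ := step1
      _ = _ := step2
      _ ≤ ENNReal.ofReal Mb * L (A 0)
          + 2 * ∑' k : ℕ, (ENNReal.ofReal Mb * L (A (k + 1))) := by
        refine add_le_add (hint 0) (mul_le_mul_right (ENNReal.tsum_le_tsum fun k => hint (k + 1)) 2)
  refine lt_of_le_of_lt key ?_
  have hsum' : (∑' k : ℕ, L (A (k + 1))) < ⊤ := by
    refine lt_of_le_of_lt ?_ hsum
    exact ENNReal.tsum_comp_le_tsum_of_injective Nat.succ_injective (fun k => L (A k))
  have h1 : ENNReal.ofReal Mb * L (A 0) < ⊤ :=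
    ENNReal.mul_lt_top ENNReal.ofReal_lt_top (measure_lt_top L _)
  have h2 : 2 * ∑' k : ℕ, (ENNReal.ofReal Mb * L (A (k + 1))) < ⊤ := by
    rw [ENNReal.tsum_mul_left]
    exact ENNReal.mul_lt_top (by norm_num)
      (ENNReal.mul_lt_top ENNReal.ofReal_lt_top hsum')
  exact ENNReal.add_lt_top.mpr ⟨h1, h2⟩
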